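/- Let k ≥ 2 and let x be a real with x ≥ (10^8·log k)/2. There exists a tournament R on vertex set [k] such that for all functions f, g : [k] → [0,1] with f(i) + g(i) ≤ 1 for all i and Σ_i (f(i) + g(i)) = 2x, one has Σ_{(i,j) ∈ E(R)} f(i)·g(j) ≤ 0.51·x². -/

import Mathlib

open scoped Classical
open Finset

noncomputable def sg (b : Bool) : ℝ := if b then 1 else -1

lemma abs_sg (b : Bool) : |sg b| = 1 := by unfold sg; cases b <;> norm_num

lemma cosh_bound (y : ℝ) (hy : |y| ≤ 1) :
    Real.exp y + Real.exp (-y) ≤ 2 * Real.exp (0.723 * y ^ 2) := by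
  have h1 := Real.exp_bound hy (n := 3) (by norm_num)
  have h2 := Real.exp_bound (x := -y) (by rwa [abs_neg]) (n := 3) (by norm_num)
  rw [abs_neg] at h2
  have hs : ∑ m ∈ Finset.range 3, y ^ m / m.factorial = 1 + y + y^2/2 := by
    rw [Finset.sum_range_succ, Finset.sum_range_succ, Finset.sum_range_succ,
      Finset.sum_range_zero]
    norm_num [Nat.factorial]
  have hs2 : ∑ m ∈ Finset.range 3, (-y) ^ m / m.factorial = 1 - y + y^2/2 := by
    rw [Finset.sum_range_succ, Finset.sum_range_succ, Finset.sum_range_succ,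
      Finset.sum_range_zero]
    norm_num [Nat.factorial]; ring
  rw [hs] at h1; rw [hs2] at h2
  norm_num [Nat.factorial] at h1 h2
  have e1 : Real.exp y ≤ 1 + y + y^2/2 + |y|^3 * (2/9) := by
    have := (abs_sub_le_iff.1 h1).1; linarith
  have e2 : Real.exp (-y) ≤ 1 - y + y^2/2 + |y|^3 * (2/9) := by
    have := (abs_sub_le_iff.1 h2).1; linarith
  have hy3 : |y|^3 ≤ y^2 := by
    have h : |y|^3 = y^2 * |y| := by
      rw [pow_succ, sq_abs]
    rw [h]
    nlinarith [sq_nonneg y, abs_nonneg y]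
  have key : 1 + (13/18) * y^2 ≤ Real.exp (0.723 * y^2) := by
    have := Real.add_one_le_exp (0.723 * y^2)
    nlinarith [sq_nonneg y]
  nlinarith [sq_nonneg y]

lemma hoeffding_count {ι : Type*} [Fintype ι] [DecidableEq ι] (c : ι → ℝ)
    (hc : ∀ p, |c p| ≤ 1) (t M : ℝ) (ht : 0 < t) (hM : 0 < M)
    (hN : ∑ p, (c p)^2 ≤ M) (htM : t ≤ 3 * M) :
    ((Finset.univ.filter (fun σ : ι → Bool => t < ∑ p, c p * sg (σ p))).card : ℝ)
      ≤ (2:ℝ) ^ (Fintype.card ι) * Real.exp (-(t^2) / (4*M)) := by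
  set l : ℝ := t / (3*M) with hl
  have hl0 : 0 < l := by positivity
  have hl1 : l ≤ 1 := by
    rw [hl, div_le_one (by positivity)]; linarith
  have mgf : ∑ σ : ι → Bool, Real.exp (l * ∑ p, c p * sg (σ p))
      = ∏ p : ι, (Real.exp (l * c p) + Real.exp (-(l * c p))) := by
    have h0 : ∀ σ : ι → Bool, Real.exp (l * ∑ p, c p * sg (σ p))
        = ∏ p : ι, Real.exp (l * (c p * sg (σ p))) := by
      intro σ
      rw [← Real.exp_sum, Finset.mul_sum]
    simp_rw [h0]
    rw [← Fintype.piFinset_univ,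
      ← Finset.prod_univ_sum (fun _ => (Finset.univ : Finset Bool))
      (fun p b => Real.exp (l * (c p * sg b)))]
    apply Finset.prod_congr rfl
    intro p _
    simp [sg, Fintype.sum_bool]
  have factor : ∀ p : ι, Real.exp (l * c p) + Real.exp (-(l * c p))
      ≤ 2 * Real.exp (0.723 * (l * c p)^2) := by
    intro p
    apply cosh_bound
    rw [abs_mul, abs_of_pos hl0]
    calc l * |c p| ≤ 1 * 1 := by
          apply mul_le_mul hl1 (hc p) (abs_nonneg _) zero_le_one
      _ = 1 := by ring
  have count : ((Finset.univ.filter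
        (fun σ : ι → Bool => t < ∑ p, c p * sg (σ p))).card : ℝ) * Real.exp (l * t)
      ≤ ∑ σ : ι → Bool, Real.exp (l * ∑ p, c p * sg (σ p)) := by
    calc ((Finset.univ.filter
        (fun σ : ι → Bool => t < ∑ p, c p * sg (σ p))).card : ℝ) * Real.exp (l * t)
        = ∑ _σ ∈ Finset.univ.filter
            (fun σ : ι → Bool => t < ∑ p, c p * sg (σ p)), Real.exp (l * t) := by
          rw [Finset.sum_const, nsmul_eq_mul]
      _ ≤ ∑ σ ∈ Finset.univ.filter
            (fun σ : ι → Bool => t < ∑ p, c p * sg (σ p)),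
            Real.exp (l * ∑ p, c p * sg (σ p)) := by
          apply Finset.sum_le_sum
          intro σ hσ
          rw [Finset.mem_filter] at hσ
          exact Real.exp_le_exp.2 (by nlinarith [hσ.2])
      _ ≤ ∑ σ : ι → Bool, Real.exp (l * ∑ p, c p * sg (σ p)) := by
          apply Finset.sum_le_sum_of_subset_of_nonneg (Finset.filter_subset _ _)
          intros; positivity
  have prodbound : ∏ p : ι, (Real.exp (l * c p) + Real.exp (-(l * c p)))
      ≤ (2:ℝ) ^ (Fintype.card ι) * Real.exp (0.723 * l^2 * ∑ p, (c p)^2) := by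
    calc ∏ p : ι, (Real.exp (l * c p) + Real.exp (-(l * c p)))
        ≤ ∏ p : ι, 2 * Real.exp (0.723 * (l * c p)^2) := by
          apply Finset.prod_le_prod
          · intros; positivity
          · intro p _; exact factor p
      _ = (2:ℝ) ^ (Fintype.card ι) * Real.exp (0.723 * l^2 * ∑ p, (c p)^2) := by
          rw [Finset.prod_mul_distrib, Finset.prod_const, ← Real.exp_sum]
          simp [Finset.card_univ, Finset.mul_sum]
          exact Finset.sum_congr rfl (fun x _ => by ring)
  have expineq : 0.723 * l^2 * ∑ p, (c p)^2 - l * t ≤ -(t^2) / (4*M) := by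
    have h1 : 0.723 * l^2 * ∑ p, (c p)^2 ≤ 0.723 * l^2 * M :=
      mul_le_mul_of_nonneg_left hN (by positivity)
    have h2 : 0.723 * l^2 * M - l * t ≤ -(t^2)/(4*M) := by
      rw [hl]
      have hM' : M ≠ 0 := ne_of_gt hM
      field_simp
      nlinarith [mul_nonneg (mul_nonneg (mul_nonneg hM.le hM.le) hM.le) (sq_nonneg t)]
    linarith
  -- combine
  have expos := Real.exp_pos (l * t)
  have step : ((Finset.univ.filter
        (fun σ : ι → Bool => t < ∑ p, c p * sg (σ p))).card : ℝ) * Real.exp (l * t)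
      ≤ (2:ℝ) ^ (Fintype.card ι) * Real.exp (0.723 * l^2 * ∑ p, (c p)^2) :=
    le_trans (mgf ▸ count) prodbound
  have final : ((Finset.univ.filter
        (fun σ : ι → Bool => t < ∑ p, c p * sg (σ p))).card : ℝ)
      ≤ (2:ℝ) ^ (Fintype.card ι) * Real.exp (0.723 * l^2 * (∑ p, (c p)^2) - l * t) := by
    rw [Real.exp_sub, ← mul_div_assoc, le_div_iff₀ expos]
    exact step
  refine le_trans final ?_
  apply mul_le_mul_of_nonneg_left _ (by positivity)
  exact Real.exp_le_exp.2 expineq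

lemma exists_top_subset {ι : Type*} [DecidableEq ι] (c : ι → ℝ) (m : ℕ) :
    ∀ S₀ : Finset ι, ∃ S, S ⊆ S₀ ∧ S.card = min m S₀.card ∧
      ∀ i ∈ S₀, i ∉ S → ∀ j ∈ S, c i ≤ c j := by
  induction m with
  | zero =>
    intro S₀
    exact ⟨∅, Finset.empty_subset _, by simp, by simp⟩
  | succ m ih =>
    intro S₀
    rcases S₀.eq_empty_or_nonempty with rfl | hne
    · exact ⟨∅, Finset.empty_subset _, by simp, by simp⟩
    · obtain ⟨i₀, hi₀, hmax⟩ := S₀.exists_max_image c hne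
      obtain ⟨S, hsub, hcard, hprop⟩ := ih (S₀.erase i₀)
      have hi₀S : i₀ ∉ S := fun h => (Finset.mem_erase.1 (hsub h)).1 rfl
      refine ⟨insert i₀ S, ?_, ?_, ?_⟩
      · intro j hj
        rcases Finset.mem_insert.1 hj with rfl | hj
        · exact hi₀
        · exact Finset.mem_of_mem_erase (hsub hj)
      · rw [Finset.card_insert_of_notMem hi₀S, hcard,
          Finset.card_erase_of_mem hi₀]
        have : 1 ≤ S₀.card := Finset.card_pos.2 hne
        omega
      · intro i hi hiS j hj
        have hine : i ≠ i₀ := fun h => hiS (h ▸ Finset.mem_insert_self _ _)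
        rcases Finset.mem_insert.1 hj with rfl | hj
        · exact hmax i hi
        · exact hprop i (Finset.mem_erase.2 ⟨hine, hi⟩)
            (fun h => hiS (Finset.mem_insert_of_mem h)) j hj

lemma select_lemma {ι : Type*} [Fintype ι] [DecidableEq ι] (c f : ι → ℝ)
    (hf0 : ∀ i, 0 ≤ f i) (hf1 : ∀ i, f i ≤ 1) (m : ℕ) (hsum : ∑ i, f i ≤ m) :
    ∃ S : Finset ι, S.card ≤ m ∧ ∑ i, f i * c i ≤ ∑ i ∈ S, c i := by
  classical
  set S₀ := Finset.univ.filter (fun i => 0 < c i) with hS₀def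
  by_cases hle : S₀.card ≤ m
  · refine ⟨S₀, hle, ?_⟩
    have h1 : ∑ i, f i * c i ≤ ∑ i, (if i ∈ S₀ then c i else 0) := by
      apply Finset.sum_le_sum
      intro i _
      by_cases hi : i ∈ S₀
      · simp only [hi, if_pos]
        have : 0 < c i := (Finset.mem_filter.1 hi).2
        nlinarith [hf0 i, hf1 i]
      · simp only [hi, if_neg, not_false_iff]
        have : ¬ 0 < c i := fun h => hi (Finset.mem_filter.2 ⟨Finset.mem_univ _, h⟩)
        nlinarith [hf0 i, not_lt.1 this]
    rw [Finset.sum_ite_mem, Finset.univ_inter] at h1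
    exact h1
  · push_neg at hle
    obtain ⟨S, hsub, hcard, hprop⟩ := exists_top_subset c m S₀
    have hScard : S.card = m := by rw [hcard]; omega
    refine ⟨S, le_of_eq hScard, ?_⟩
    rcases Nat.eq_zero_or_pos m with rfl | hm
    · -- f must be zero
      have : ∀ i ∈ Finset.univ, f i = 0 := by
        intro i _
        have h := Finset.sum_le_sum (fun j (_ : j ∈ Finset.univ) => hf0 j)
        by_contra h0
        have hpos : 0 < f i := lt_of_le_of_ne (hf0 i) (Ne.symm h0)
        have : 0 < ∑ j, f j := Finset.sum_pos' (fun j _ => hf0 j) ⟨i, Finset.mem_univ i, hpos⟩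
        simp at hsum
        linarith
      have hS : S = ∅ := Finset.card_eq_zero.1 hScard
      simp [hS]
      calc ∑ i, f i * c i = ∑ i, (0:ℝ) := by
            apply Finset.sum_congr rfl
            intro i hi; rw [this i hi]; ring
        _ = 0 := by simp
      exact le_refl 0
    · -- S nonempty; θ := min c over S
      have hSne : S.Nonempty := Finset.card_pos.1 (hScard ▸ hm)
      obtain ⟨j₀, hj₀, hmin⟩ := S.exists_min_image c hSne
      set θ := c j₀ with hθ
      have hθpos : 0 < θ := (Finset.mem_filter.1 (hsub hj₀)).2
      have key : ∀ i, f i * c i ≤ f i * θ + (if i ∈ S then c i - θ else 0) := by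
        intro i
        by_cases hi : i ∈ S
        · simp only [hi, if_pos]
          have h1 : θ ≤ c i := hmin i hi
          nlinarith [hf0 i, hf1 i]
        · simp only [hi, if_neg, not_false_iff]
          have hci : c i ≤ θ := by
            by_cases hi0 : i ∈ S₀
            · exact hprop i hi0 hi j₀ hj₀
            · have : ¬ 0 < c i := fun h => hi0 (Finset.mem_filter.2 ⟨Finset.mem_univ _, h⟩)
              linarith [not_lt.1 this, hθpos]
          nlinarith [hf0 i]
      calc ∑ i, f i * c i ≤ ∑ i, (f i * θ + (if i ∈ S then c i - θ else 0)) :=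
            Finset.sum_le_sum (fun i _ => key i)
        _ = θ * (∑ i, f i) + ∑ i ∈ S, (c i - θ) := by
            rw [Finset.sum_add_distrib, Finset.sum_ite_mem, Finset.univ_inter,
              ← Finset.sum_mul, mul_comm]
        _ ≤ θ * m + (∑ i ∈ S, c i - S.card * θ) := by
            rw [Finset.sum_sub_distrib, Finset.sum_const, nsmul_eq_mul]
            have := mul_le_mul_of_nonneg_left hsum hθpos.le
            linarith
        _ = ∑ i ∈ S, c i := by rw [hScard]; ring

lemma card_small_sets (k m : ℕ) :
    ((Finset.univ.filter (fun A : Finset (Fin k) => A.card ≤ m)).card : ℝ)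
      ≤ ((k:ℝ)+1)^m := by
  have h : (Finset.univ.filter (fun A : Finset (Fin k) => A.card ≤ m)).card
      ≤ Fintype.card (Fin m → Option (Fin k)) := by
    apply Finset.card_le_card_of_injOn
      (fun A => fun i : Fin m => (A.sort (· ≤ ·))[(i:ℕ)]?)
    · intro A _; exact Finset.mem_univ _
    · intro A hA B hB hfeq
      simp only [Finset.mem_coe, Finset.mem_filter] at hA hB
      have hlA : (A.sort (· ≤ ·)).length ≤ m := by
        rw [Finset.length_sort]; exact hA.2
      have hlB : (B.sort (· ≤ ·)).length ≤ m := by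
        rw [Finset.length_sort]; exact hB.2
      have : A.sort (· ≤ ·) = B.sort (· ≤ ·) := by
        apply List.ext_getElem?
        intro n
        by_cases hn : n < m
        · exact congrFun hfeq ⟨n, hn⟩
        · push_neg at hn
          rw [List.getElem?_eq_none (by omega), List.getElem?_eq_none (by omega)]
      have := congrArg List.toFinset this
      rwa [Finset.sort_toFinset, Finset.sort_toFinset] at this
  calc ((Finset.univ.filter (fun A : Finset (Fin k) => A.card ≤ m)).card : ℝ)
      ≤ (Fintype.card (Fin m → Option (Fin k)) : ℝ) := by exact_mod_cast h
    _ = ((k:ℝ)+1)^m := by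
        rw [Fintype.card_fun]
        simp [Fintype.card_option]

noncomputable def eps (k : ℕ) (σ : Fin k × Fin k → Bool) (i j : Fin k) : ℝ :=
  if i < j then sg (σ (i,j)) else if j < i then -sg (σ (j,i)) else 0

noncomputable def cAB (k : ℕ) (A B : Finset (Fin k)) (p : Fin k × Fin k) : ℝ :=
  if p.1 < p.2 then
    ((if p.1 ∈ A then (1:ℝ) else 0) * (if p.2 ∈ B then 1 else 0)
      - (if p.1 ∈ B then (1:ℝ) else 0) * (if p.2 ∈ A then 1 else 0)) else 0

lemma D_eq (k : ℕ) (σ : Fin k × Fin k → Bool) (A B : Finset (Fin k)) :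
    ∑ i ∈ A, ∑ j ∈ B, eps k σ i j = ∑ p : Fin k × Fin k, cAB k A B p * sg (σ p) := by
  classical
  have e1 : ∀ (h : Fin k → ℝ), ∑ i ∈ A, h i = ∑ i : Fin k, if i ∈ A then h i else 0 := by
    intro h; rw [Finset.sum_ite_mem, Finset.univ_inter]
  have e2 : ∀ (h : Fin k → ℝ), ∑ j ∈ B, h j = ∑ j : Fin k, if j ∈ B then h j else 0 := by
    intro h; rw [Finset.sum_ite_mem, Finset.univ_inter]
  set U : Fin k → Fin k → ℝ := fun i j => if i < j then
    (if i ∈ A then (1:ℝ) else 0) * (if j ∈ B then 1 else 0) * sg (σ (i,j)) else 0 with hU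
  set W : Fin k → Fin k → ℝ := fun i j => if j < i then
    (if i ∈ A then (1:ℝ) else 0) * (if j ∈ B then 1 else 0) * sg (σ (j,i)) else 0 with hW
  have key : ∀ i j, (if i ∈ A then (if j ∈ B then eps k σ i j else 0) else 0)
      = U i j - W i j := by
    intro i j
    rcases lt_trichotomy i j with h|h|h
    · simp only [hU, hW, eps, h, if_pos, lt_asymm h, if_neg, not_false_iff, if_false]
      by_cases hA : i ∈ A <;> by_cases hB : j ∈ B <;> simp [hA, hB]
    · subst h
      simp only [hU, hW, eps, lt_irrefl, if_neg, not_false_iff, if_false]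
      by_cases hA : i ∈ A <;> by_cases hB : i ∈ B <;> simp [hA, hB]
    · simp only [hU, hW, eps, h, if_pos, lt_asymm h, if_neg, not_false_iff, if_false]
      by_cases hA : i ∈ A <;> by_cases hB : j ∈ B <;> simp [hA, hB]
  have lhs : ∑ i ∈ A, ∑ j ∈ B, eps k σ i j
      = ∑ i : Fin k, ∑ j : Fin k, (U i j - W i j) := by
    rw [e1]
    apply Finset.sum_congr rfl
    intro i _
    by_cases hA : i ∈ A
    · simp only [hA, if_pos]
      rw [e2]
      apply Finset.sum_congr rfl
      intro j _
      have := key i j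
      simp only [hA, if_pos] at this
      exact this
    · simp only [hA, if_neg, not_false_iff, if_false]
      symm
      apply Finset.sum_eq_zero
      intro j _
      have := key i j
      simp only [hA, if_neg, not_false_iff, if_false] at this
      linarith [this]
  have swap : ∑ i : Fin k, ∑ j : Fin k, W i j = ∑ i : Fin k, ∑ j : Fin k, W j i :=
    Finset.sum_comm
  rw [lhs]
  rw [Fintype.sum_prod_type]
  simp only [Finset.sum_sub_distrib]
  rw [swap]
  rw [← Finset.sum_sub_distrib]
  apply Finset.sum_congr rfl
  intro i _
  rw [← Finset.sum_sub_distrib]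
  apply Finset.sum_congr rfl
  intro j _
  simp only [hU, hW, cAB]
  by_cases h : i < j
  · simp only [h, if_pos]; ring
  · simp only [h, if_neg, not_false_iff, if_false]; ring

set_option maxHeartbeats 1000000 in
-- existence of a "good" sigma
lemma exists_good_sigma (k : ℕ) (hk : 2 ≤ k) (x : ℝ)
    (hx : (10 : ℝ) ^ 8 * Real.log k / 2 ≤ x) :
    ∃ σ : Fin k × Fin k → Bool, ∀ A B : Finset (Fin k),
      A.card ≤ ⌈2*x⌉₊ → B.card ≤ ⌈2*x⌉₊ →
      ∑ i ∈ A, ∑ j ∈ B, eps k σ i j ≤ 0.02 * x^2 := by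
  classical
  set m := ⌈2*x⌉₊ with hm
  have hk2 : (2:ℝ) ≤ k := by exact_mod_cast hk
  have hk1 : (1:ℝ) ≤ k := by linarith
  have hlog2 : (0.69:ℝ) ≤ Real.log 2 := by
    have := Real.log_two_gt_d9; linarith
  have hL : (0.69:ℝ) ≤ Real.log k := by
    have : Real.log 2 ≤ Real.log k := by
      apply Real.log_le_log (by norm_num)
      exact_mod_cast hk
    linarith
  have hxL : 5 * 10^7 * Real.log k ≤ x := by nlinarith
  have hxpos : (0:ℝ) < x := by nlinarith
  have hx1 : (10^7:ℝ) ≤ x := by nlinarith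
  have hm1 : 2*x ≤ (m:ℝ) := Nat.le_ceil _
  have hm2 : (m:ℝ) ≤ 2*x + 1 := le_of_lt (Nat.ceil_lt_add_one (by positivity))
  have hm3 : (m:ℝ) ≤ 3*x := by linarith
  have hmpos : (0:ℝ) < m := by linarith
  set t := 0.02 * x^2 with ht
  set M := 2 * (m:ℝ)^2 with hM
  set E := Real.exp (-(t^2) / (4*M)) with hE
  -- each bad event is small
  have indiv : ∀ A B : Finset (Fin k), A.card ≤ m → B.card ≤ m →
      ((Finset.univ.filter (fun σ : Fin k × Fin k → Bool =>
        t < ∑ i ∈ A, ∑ j ∈ B, eps k σ i j)).card : ℝ)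
      ≤ (2:ℝ) ^ (k*k) * E := by
    intro A B hA hB
    have hfilter : (Finset.univ.filter (fun σ : Fin k × Fin k → Bool =>
        t < ∑ i ∈ A, ∑ j ∈ B, eps k σ i j))
        = (Finset.univ.filter (fun σ : Fin k × Fin k → Bool =>
            t < ∑ p : Fin k × Fin k, cAB k A B p * sg (σ p))) := by
      apply Finset.filter_congr
      intro σ _
      rw [D_eq]
    rw [hfilter]
    have hcard : Fintype.card (Fin k × Fin k) = k * k := by simp
    have hc : ∀ p, |cAB k A B p| ≤ 1 := by
      intro p; unfold cAB; split_ifs <;> norm_num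
    have hind : ∀ C : Finset (Fin k), ∑ i : Fin k, (if i ∈ C then (1:ℝ) else 0) = C.card := by
      intro C
      rw [Finset.sum_ite_mem, Finset.univ_inter, Finset.sum_const, nsmul_eq_mul, mul_one]
    have hN : ∑ p : Fin k × Fin k, (cAB k A B p)^2 ≤ M := by
      have hpt : ∀ p : Fin k × Fin k, (cAB k A B p)^2 ≤
          (if p.1 ∈ A then (1:ℝ) else 0) * (if p.2 ∈ B then 1 else 0)
          + (if p.1 ∈ B then (1:ℝ) else 0) * (if p.2 ∈ A then 1 else 0) := by
        intro p; unfold cAB; split_ifs <;> norm_num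
      calc ∑ p : Fin k × Fin k, (cAB k A B p)^2
          ≤ ∑ p : Fin k × Fin k, ((if p.1 ∈ A then (1:ℝ) else 0) * (if p.2 ∈ B then 1 else 0)
            + (if p.1 ∈ B then (1:ℝ) else 0) * (if p.2 ∈ A then 1 else 0)) :=
            Finset.sum_le_sum (fun p _ => hpt p)
        _ = (A.card : ℝ) * B.card + (B.card : ℝ) * A.card := by
            rw [Finset.sum_add_distrib, Fintype.sum_prod_type, Fintype.sum_prod_type]
            dsimp only
            rw [← hind A, ← hind B, Finset.sum_mul_sum, Finset.sum_mul_sum]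
        _ ≤ M := by
            have hA' : (A.card:ℝ) ≤ m := by exact_mod_cast hA
            have hB' : (B.card:ℝ) ≤ m := by exact_mod_cast hB
            have h0A : (0:ℝ) ≤ A.card := by positivity
            have h0B : (0:ℝ) ≤ B.card := by positivity
            rw [hM]; nlinarith
    have := hoeffding_count (cAB k A B) hc t M (by positivity) (by positivity) hN
      (by rw [ht, hM]; nlinarith)
    rw [hcard] at this
    exact this
  -- union bound
  set Fam : Finset (Finset (Fin k) × Finset (Fin k)) :=
    (Finset.univ.filter (fun A : Finset (Fin k) => A.card ≤ m)) ×ˢ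
    (Finset.univ.filter (fun A : Finset (Fin k) => A.card ≤ m)) with hFam
  set badset := Finset.univ.filter (fun σ : Fin k × Fin k → Bool =>
    ¬ ∀ A B : Finset (Fin k), A.card ≤ m → B.card ≤ m →
      ∑ i ∈ A, ∑ j ∈ B, eps k σ i j ≤ t) with hbadset
  have hsub : badset ⊆ Fam.biUnion (fun AB =>
      Finset.univ.filter (fun σ : Fin k × Fin k → Bool =>
        t < ∑ i ∈ AB.1, ∑ j ∈ AB.2, eps k σ i j)) := by
    intro σ hσ
    rw [hbadset, Finset.mem_filter] at hσ
    push_neg at hσ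
    obtain ⟨-, A, B, hA, hB, hgt⟩ := hσ
    rw [Finset.mem_biUnion]
    refine ⟨(A,B), ?_, ?_⟩
    · rw [hFam, Finset.mem_product]
      constructor <;> rw [Finset.mem_filter] <;> exact ⟨Finset.mem_univ _, by assumption⟩
    · rw [Finset.mem_filter]
      exact ⟨Finset.mem_univ _, hgt⟩
  have hcount : (badset.card : ℝ) ≤ ((k:ℝ)+1)^m * ((k:ℝ)+1)^m * ((2:ℝ)^(k*k) * E) := by
    calc (badset.card : ℝ)
        ≤ ((Fam.biUnion (fun AB =>
            Finset.univ.filter (fun σ : Fin k × Fin k → Bool =>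
              t < ∑ i ∈ AB.1, ∑ j ∈ AB.2, eps k σ i j))).card : ℝ) := by
          exact_mod_cast Finset.card_le_card hsub
      _ ≤ ∑ AB ∈ Fam, ((Finset.univ.filter (fun σ : Fin k × Fin k → Bool =>
              t < ∑ i ∈ AB.1, ∑ j ∈ AB.2, eps k σ i j)).card : ℝ) := by
          exact_mod_cast Finset.card_biUnion_le
      _ ≤ ∑ AB ∈ Fam, ((2:ℝ)^(k*k) * E) := by
          apply Finset.sum_le_sum
          intro AB hAB
          rw [hFam, Finset.mem_product, Finset.mem_filter, Finset.mem_filter] at hAB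
          exact indiv AB.1 AB.2 hAB.1.2 hAB.2.2
      _ = (Fam.card : ℝ) * ((2:ℝ)^(k*k) * E) := by
          rw [Finset.sum_const, nsmul_eq_mul]
      _ ≤ ((k:ℝ)+1)^m * ((k:ℝ)+1)^m * ((2:ℝ)^(k*k) * E) := by
          apply mul_le_mul_of_nonneg_right _
            (mul_nonneg (pow_nonneg (by norm_num) _) (by rw [hE]; positivity))
          rw [hFam, Finset.card_product]
          push_cast
          have h1 := card_small_sets k m
          have h0 : (0:ℝ) ≤ ((Finset.univ.filter
              (fun A : Finset (Fin k) => A.card ≤ m)).card : ℝ) := Nat.cast_nonneg _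
          exact mul_le_mul h1 h1 h0 (le_trans h0 h1)
  -- numeric bound
  have hnum : ((k:ℝ)+1)^m * ((k:ℝ)+1)^m * E < 1 := by
    have hbase : (0:ℝ) < (k:ℝ)+1 := by linarith
    have hexp : ((k:ℝ)+1)^m = Real.exp (m * Real.log ((k:ℝ)+1)) := by
      rw [← Real.exp_log hbase, ← Real.exp_nat_mul, Real.exp_log hbase]
    rw [hexp, hE, ← Real.exp_add, ← Real.exp_add, Real.exp_lt_one_iff, neg_div]
    have hlogk1 : Real.log ((k:ℝ)+1) ≤ 2 * Real.log k := by
      have h1 : (k:ℝ)+1 ≤ (k:ℝ)^2 := by nlinarith [hk2]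
      calc Real.log ((k:ℝ)+1) ≤ Real.log ((k:ℝ)^2) := Real.log_le_log (by linarith) h1
        _ = 2 * Real.log k := by
            rw [Real.log_pow]; push_cast; ring
    have hlogpos : (0:ℝ) ≤ Real.log ((k:ℝ)+1) := Real.log_nonneg (by linarith)
    have h1 : (m:ℝ) * Real.log ((k:ℝ)+1) ≤ 6 * x * Real.log k := by
      nlinarith
    have hM4 : (0:ℝ) < 4 * M := by rw [hM]; positivity
    have hMle : 4 * M ≤ 72 * x^2 := by rw [hM]; nlinarith
    have key : (m:ℝ) * Real.log ((k:ℝ)+1) + (m:ℝ) * Real.log ((k:ℝ)+1) < t^2/(4*M) := by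
      rw [lt_div_iff₀ hM4]
      have hS : (0:ℝ) ≤ (m:ℝ) * Real.log ((k:ℝ)+1) :=
        mul_nonneg (by positivity) hlogpos
      have hup : ((m:ℝ) * Real.log ((k:ℝ)+1) + (m:ℝ) * Real.log ((k:ℝ)+1)) * (4*M)
          ≤ (12 * x * Real.log k) * (72 * x^2) := by
        apply mul_le_mul (by linarith) hMle (by linarith) (by nlinarith)
      have hfin : (12 * x * Real.log k) * (72 * x^2) < t^2 := by
        rw [ht]
        nlinarith [mul_pos (mul_pos hxpos hxpos) hxpos,
          mul_nonneg (mul_nonneg (mul_nonneg hxpos.le hxpos.le) hxpos.le)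
            (sub_nonneg.2 hxL)]
      linarith
    linarith
  -- conclude
  by_contra hcon
  push_neg at hcon
  have hbaduniv : badset = Finset.univ := by
    rw [hbadset]
    apply Finset.filter_true_of_mem
    intro σ _
    obtain ⟨A, B, hA, hB, hgt⟩ := hcon σ
    push_neg
    exact ⟨A, B, hA, hB, hgt⟩
  have hΩ : ((Finset.univ : Finset (Fin k × Fin k → Bool)).card : ℝ) = 2^(k*k) := by
    rw [Finset.card_univ]
    simp [Fintype.card_fun]
  rw [hbaduniv, hΩ] at hcount
  have h2pos : (0:ℝ) < 2^(k*k) := by positivity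
  nlinarith [hnum, hcount, h2pos]

/-- The host tournament lemma: for `k ≥ 2` and real `x ≥ (10^8·log k)/2` there is a
tournament `R` on `[k]` such that for all weight functions `f, g : [k] → [0,1]` with
`f + g ≤ 1` pointwise and `Σᵢ (f(i)+g(i)) = 2x`, we have `Σ_{(i,j)∈E(R)} f(i)g(j) ≤ 0.51x²`. -/
theorem host_tournament_lemma (k : ℕ) (hk : 2 ≤ k) (x : ℝ)
    (hx : (10 : ℝ) ^ 8 * Real.log k / 2 ≤ x) :
    ∃ R : Fin k → Fin k → Prop, (∀ i, ¬ R i i) ∧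
      (∀ i j : Fin k, i ≠ j → (R i j ↔ ¬ R j i)) ∧
      ∀ f g : Fin k → ℝ,
        (∀ i, 0 ≤ f i) → (∀ i, 0 ≤ g i) → (∀ i, f i ≤ 1) → (∀ i, g i ≤ 1) →
        (∀ i, f i + g i ≤ 1) → (∑ i : Fin k, (f i + g i)) = 2 * x →
        ∑ i : Fin k, ∑ j : Fin k, (if R i j then f i * g j else 0) ≤ 0.51 * x ^ 2 := by
  classical
  obtain ⟨σ, hgood⟩ := exists_good_sigma k hk x hx
  set m := ⌈2*x⌉₊ with hmdef
  -- basic numeric facts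
  have hk2 : (2:ℝ) ≤ k := by exact_mod_cast hk
  have hlog2 : (0.69:ℝ) ≤ Real.log 2 := by
    have := Real.log_two_gt_d9; linarith
  have hL : (0.69:ℝ) ≤ Real.log k := by
    have : Real.log 2 ≤ Real.log k := Real.log_le_log (by norm_num) (by exact_mod_cast hk)
    linarith
  have hxpos : (0:ℝ) < x := by nlinarith
  have hm1 : 2*x ≤ (m:ℝ) := Nat.le_ceil _
  set R : Fin k → Fin k → Prop :=
    fun i j => (i < j ∧ σ (i,j) = true) ∨ (j < i ∧ σ (j,i) = false) with hR
  have hRirr : ∀ i, ¬ R i i := by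
    intro i h
    rcases h with ⟨h, -⟩ | ⟨h, -⟩ <;> exact lt_irrefl i h
  have hRasym : ∀ i j : Fin k, i ≠ j → (R i j ↔ ¬ R j i) := by
    intro i j hne
    rcases lt_or_gt_of_ne hne with h | h
    · cases hb : σ (i,j) <;>
        simp [hR, h, lt_asymm h, lt_irrefl, hb, not_lt_of_gt h]
    · cases hb : σ (j,i) <;>
        simp [hR, h, lt_asymm h, lt_irrefl, hb, not_lt_of_gt h]
  -- eps vs R
  have hepsR : ∀ i j, 2 * (if R i j then (1:ℝ) else 0)
      = (if i = j then 0 else 1) + eps k σ i j := by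
    intro i j
    rcases lt_trichotomy i j with h|h|h
    · rcases Bool.dichotomy (σ (i,j)) with hb | hb <;>
        simp [hR, eps, sg, h, h.ne, lt_asymm h, hb] <;> norm_num
    · subst h; simp [hR, eps, lt_irrefl]
    · rcases Bool.dichotomy (σ (j,i)) with hb | hb <;>
        simp [hR, eps, sg, h, lt_asymm h, hb, Ne.symm h.ne] <;> norm_num
  refine ⟨R, hRirr, hRasym, ?_⟩
  intro f g hf0 hg0 hf1 hg1 hfg1 hsum
  -- D(f,g) ≤ 0.02 x²
  have hfm : ∑ i, f i ≤ (m:ℝ) := by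
    have h1 : ∑ i, f i ≤ ∑ i, (f i + g i) :=
      Finset.sum_le_sum (fun i _ => by linarith [hg0 i])
    rw [hsum] at h1; linarith
  have hgm : ∑ i, g i ≤ (m:ℝ) := by
    have h1 : ∑ i, g i ≤ ∑ i, (f i + g i) :=
      Finset.sum_le_sum (fun i _ => by linarith [hf0 i])
    rw [hsum] at h1; linarith
  have hD : ∑ i : Fin k, ∑ j : Fin k, f i * g j * eps k σ i j ≤ 0.02 * x^2 := by
    set c1 : Fin k → ℝ := fun i => ∑ j : Fin k, eps k σ i j * g j with hc1
    have e1 : ∑ i : Fin k, ∑ j : Fin k, f i * g j * eps k σ i j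
        = ∑ i : Fin k, f i * c1 i := by
      apply Finset.sum_congr rfl
      intro i _
      rw [hc1, Finset.mul_sum]
      apply Finset.sum_congr rfl
      intro j _; ring
    obtain ⟨A, hAcard, hA⟩ := select_lemma c1 f hf0 hf1 m hfm
    set c2 : Fin k → ℝ := fun j => ∑ i ∈ A, eps k σ i j with hc2
    have e2 : ∑ i ∈ A, c1 i = ∑ j : Fin k, g j * c2 j := by
      calc ∑ i ∈ A, c1 i = ∑ i ∈ A, ∑ j : Fin k, eps k σ i j * g j := rfl
        _ = ∑ j : Fin k, ∑ i ∈ A, eps k σ i j * g j := Finset.sum_comm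
        _ = ∑ j : Fin k, g j * c2 j := by
            apply Finset.sum_congr rfl
            intro j _
            simp only [hc2]
            rw [Finset.mul_sum]
            apply Finset.sum_congr rfl
            intro i _; ring
    obtain ⟨B, hBcard, hB⟩ := select_lemma c2 g hg0 hg1 m hgm
    have e3 : ∑ j ∈ B, c2 j = ∑ i ∈ A, ∑ j ∈ B, eps k σ i j := by
      simp only [hc2]
      exact Finset.sum_comm
    calc ∑ i : Fin k, ∑ j : Fin k, f i * g j * eps k σ i j
        = ∑ i : Fin k, f i * c1 i := e1
      _ ≤ ∑ i ∈ A, c1 i := hA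
      _ = ∑ j : Fin k, g j * c2 j := e2
      _ ≤ ∑ j ∈ B, c2 j := hB
      _ = ∑ i ∈ A, ∑ j ∈ B, eps k σ i j := e3
      _ ≤ 0.02 * x^2 := hgood A B hAcard hBcard
  -- main identity
  have hkey : ∀ i j : Fin k, 2 * (@ite ℝ (R i j) (Classical.propDecidable _) (f i * g j) 0)
      = (if i = j then 0 else f i * g j) + f i * g j * eps k σ i j := by
    intro i j
    by_cases heq : i = j
    · subst heq
      simp [hRirr i, eps, lt_irrefl]
    · have h := hepsR i j
      simp only [heq, if_neg, not_false_iff, if_false] at h ⊢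
      by_cases hij : R i j
      · simp only [hij, if_pos] at h ⊢
        have he : eps k σ i j = 1 := by linarith
        rw [he]; ring
      · simp only [hij, if_neg, not_false_iff, if_false] at h ⊢
        have he : eps k σ i j = -1 := by linarith
        rw [he]; ring
  -- sum of diagonal-free product
  have hab : ∑ i : Fin k, ∑ j : Fin k, (if i = j then (0:ℝ) else f i * g j)
      ≤ x^2 := by
    have e4 : ∀ i : Fin k, ∑ j : Fin k, (if i = j then (0:ℝ) else f i * g j)
        = f i * (∑ j, g j) - f i * g i := by
      intro i
      have : ∑ j : Fin k, (if i = j then (0:ℝ) else f i * g j)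
          = ∑ j : Fin k, (f i * g j - if i = j then f i * g j else 0) := by
        apply Finset.sum_congr rfl
        intro j _
        by_cases h : i = j <;> simp [h]
      rw [this, Finset.sum_sub_distrib, Finset.sum_ite_eq, if_pos (Finset.mem_univ _),
        ← Finset.mul_sum]
    have e5 : ∑ i : Fin k, ∑ j : Fin k, (if i = j then (0:ℝ) else f i * g j)
        = (∑ i, f i) * (∑ j, g j) - ∑ i, f i * g i := by
      simp_rw [e4]
      rw [Finset.sum_sub_distrib, ← Finset.sum_mul]
    rw [e5]
    have hfgnn : (0:ℝ) ≤ ∑ i, f i * g i :=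
      Finset.sum_nonneg (fun i _ => mul_nonneg (hf0 i) (hg0 i))
    have hsab : (∑ i, f i) + (∑ i, g i) = 2*x := by
      rw [← Finset.sum_add_distrib]; exact hsum
    have hfnn : (0:ℝ) ≤ ∑ i, f i := Finset.sum_nonneg (fun i _ => hf0 i)
    have hgnn : (0:ℝ) ≤ ∑ i, g i := Finset.sum_nonneg (fun i _ => hg0 i)
    nlinarith [sq_nonneg ((∑ i, f i) - (∑ i, g i))]
  -- combine
  have hdouble : 2 * ∑ i : Fin k, ∑ j : Fin k,
        (@ite ℝ (R i j) (Classical.propDecidable _) (f i * g j) 0)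
      = (∑ i : Fin k, ∑ j : Fin k, (if i = j then (0:ℝ) else f i * g j))
        + ∑ i : Fin k, ∑ j : Fin k, f i * g j * eps k σ i j := by
    rw [Finset.mul_sum, ← Finset.sum_add_distrib]
    apply Finset.sum_congr rfl
    intro i _
    rw [Finset.mul_sum, ← Finset.sum_add_distrib]
    apply Finset.sum_congr rfl
    intro j _
    exact hkey i j
  have h2 : (0:ℝ) < 2 := by norm_num
  rw [← mul_le_mul_iff_right₀ h2, hdouble]
  linarith [hab, hD]
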